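/- The phase point operators sum to d times the identity: Σ over u ∈ ZMod d × ZMod d of A_u = (d : ℂ) • (1 : Matrix (ZMod d) (ZMod d) ℂ). -/

import Mathlib

open Matrix Complex

/-- ω = exp(2πi/d). -/
noncomputable def omegaC (d : ℕ) : ℂ := Complex.exp (2 * Real.pi * Complex.I / d)

/-- The clock matrix `Z`, with `Z x x = ω ^ x.val`. -/
noncomputable def Zmat (d : ℕ) : Matrix (ZMod d) (ZMod d) ℂ :=
  Matrix.diagonal (fun x => omegaC d ^ x.val)

/-- The shift matrix `X`, with `X x y = 1` iff `x = y + 1`. -/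
noncomputable def Xmat (d : ℕ) : Matrix (ZMod d) (ZMod d) ℂ :=
  Matrix.of fun x y => if x = y + 1 then 1 else 0

/-- The Heisenberg–Weyl operator `T_a`. -/
noncomputable def TW (d : ℕ) [NeZero d] (a : ZMod d × ZMod d) : Matrix (ZMod d) (ZMod d) ℂ :=
  omegaC d ^ ((-((2 : ZMod d)⁻¹ * a.1 * a.2)).val) • (Zmat d ^ a.1.val * Xmat d ^ a.2.val)

/-- The phase point operator at the origin, `A_0 = (1/d) • ∑ a, T_a`. -/
noncomputable def Apoint0 (d : ℕ) [NeZero d] : Matrix (ZMod d) (ZMod d) ℂ :=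
  (1 / (d : ℂ)) • ∑ a : ZMod d × ZMod d, TW d a

/-- The phase point operator `A_u = T_u * A_0 * T_uᴴ`. -/
noncomputable def Apoint (d : ℕ) [NeZero d] (u : ZMod d × ZMod d) : Matrix (ZMod d) (ZMod d) ℂ :=
  TW d u * Apoint0 d * (TW d u)ᴴ

section Aux

set_option linter.unusedSectionVars false

variable (d : ℕ) [NeZero d]

lemma hprim : IsPrimitiveRoot (omegaC d) d :=
  Complex.isPrimitiveRoot_exp d (NeZero.ne d)

noncomputable def eC (z : ZMod d) : ℂ := omegaC d ^ z.val

lemma omega_pow_mod (n : ℕ) : omegaC d ^ n = omegaC d ^ (n % d) := by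
  conv_lhs => rw [← Nat.div_add_mod n d]
  rw [pow_add, pow_mul, (hprim d).pow_eq_one, one_pow, one_mul]

lemma eC_add (z w : ZMod d) : eC d (z + w) = eC d z * eC d w := by
  rw [eC, eC, eC, ZMod.val_add, ← omega_pow_mod, pow_add]

lemma eC_zero : eC d 0 = 1 := by
  simp [eC, ZMod.val_zero]

lemma eC_mul_val (z w : ZMod d) : eC d (z * w) = (eC d z) ^ w.val := by
  rw [eC, eC, ZMod.val_mul, ← omega_pow_mod, pow_mul]

lemma eC_neg_mul (z : ZMod d) : eC d (-z) * eC d z = 1 := by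
  rw [← eC_add, neg_add_cancel, eC_zero]

lemma eC_ne_zero (z : ZMod d) : eC d z ≠ 0 :=
  pow_ne_zero _ (Complex.exp_ne_zero _)

lemma eC_neg (z : ZMod d) : eC d (-z) = (eC d z)⁻¹ :=
  eq_inv_of_mul_eq_one_left (eC_neg_mul d z)

lemma conj_omega : (starRingEnd ℂ) (omegaC d) = (omegaC d)⁻¹ := by
  rw [omegaC, ← Complex.exp_conj, ← Complex.exp_neg]
  congr 1
  simp [map_div₀, Complex.conj_I, map_ofNat]
  ring

lemma eC_conj (z : ZMod d) : (starRingEnd ℂ) (eC d z) = eC d (-z) := by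
  rw [eC, map_pow, conj_omega, inv_pow, eC_neg, eC]

lemma char_sum (t : ZMod d) :
    ∑ a : ZMod d, eC d (a * t) = if t = 0 then (d : ℂ) else 0 := by
  have key : ∑ a : ZMod d, eC d (a * t) = ∑ i ∈ Finset.range d, (eC d t) ^ i := by
    rw [Finset.sum_bij' (fun (a : ZMod d) _ => a.val) (fun i _ => (i : ZMod d))]
    · intro a _; exact Finset.mem_range.2 (ZMod.val_lt a)
    · intro i hi; exact Finset.mem_univ _
    · intro a _; exact ZMod.natCast_rightInverse a
    · intro i hi; exact ZMod.val_cast_of_lt (Finset.mem_range.1 hi)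
    · intro a _; rw [mul_comm, eC_mul_val]
  rw [key]
  by_cases ht : t = 0
  · simp [ht, eC_zero]
  · rw [if_neg ht]
    have hne1 : eC d t ≠ 1 := by
      apply (hprim d).pow_ne_one_of_pos_of_lt
      · exact (fun h => ht ((ZMod.val_eq_zero t).1 h))
      · exact ZMod.val_lt t
    rw [geom_sum_eq hne1]
    have : eC d t ^ d = 1 := by
      rw [eC, ← pow_mul, mul_comm, pow_mul, (hprim d).pow_eq_one, one_pow]
    rw [this, sub_self, zero_div]

omit [NeZero d] in
lemma ite_shift {p q : Prop} [Decidable p] [Decidable q] (h : p ↔ q) (a b : ℂ) :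
    (if p then a else b) = if q then a else b := by simp [h]

lemma Xpow_apply (n : ℕ) (x y : ZMod d) :
    (Xmat d ^ n) x y = if x = y + (n : ZMod d) then 1 else 0 := by
  induction n generalizing x y with
  | zero => simp [Matrix.one_apply, eq_comm]
  | succ n ih =>
    rw [pow_succ, Matrix.mul_apply]
    have step : ∀ z : ZMod d, (Xmat d ^ n) x z * Xmat d z y
        = if z = y + 1 then (if x = z + (n : ZMod d) then 1 else 0) else 0 := by
      intro z
      rw [ih, Xmat]
      by_cases h : z = y + 1 <;> simp [h]
    rw [Finset.sum_congr rfl fun z _ => step z,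
      Finset.sum_ite_eq' Finset.univ (y + 1) fun z => if x = z + (n : ZMod d) then (1:ℂ) else 0]
    simp only [Finset.mem_univ, if_true]
    have hc : y + 1 + (n : ZMod d) = y + ((n + 1 : ℕ) : ZMod d) := by push_cast; ring
    rw [hc]

lemma TW_apply (a : ZMod d × ZMod d) (x y : ZMod d) :
    TW d a x y = if x = y + a.2 then
      eC d (-((2 : ZMod d)⁻¹ * a.1 * a.2)) * eC d (x * a.1) else 0 := by
  rw [TW, Matrix.smul_apply, Matrix.mul_apply]
  rw [Zmat, Matrix.diagonal_pow]
  simp only [Matrix.diagonal_apply, Pi.pow_apply, ite_mul, zero_mul]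
  rw [Finset.sum_ite_eq Finset.univ x fun z => (omegaC d ^ x.val) ^ a.1.val * (Xmat d ^ a.2.val) z y]
  simp only [Finset.mem_univ, if_true, Xpow_apply, ZMod.natCast_val, ZMod.cast_id]
  rw [mul_ite, mul_zero, smul_eq_mul, mul_ite, mul_zero]
  congr 1
  rw [mul_one, eC_mul_val]
  rfl

noncomputable def Pmat (d : ℕ) : Matrix (ZMod d) (ZMod d) ℂ :=
  Matrix.of fun x y => if x + y = 0 then 1 else 0

lemma sum_TW (h2 : (2 : ZMod d)⁻¹ * 2 = 1) :
    ∑ a : ZMod d × ZMod d, TW d a = (d : ℂ) • Pmat d := by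
  ext x y
  rw [Matrix.sum_apply, Fintype.sum_prod_type]
  have inner : ∀ a1 : ZMod d, ∑ a2 : ZMod d, TW d (a1, a2) x y
      = eC d (a1 * ((2 : ZMod d)⁻¹ * (x + y))) := by
    intro a1
    have step : ∀ a2 : ZMod d, TW d (a1, a2) x y =
        if a2 = x - y then eC d (-((2 : ZMod d)⁻¹ * a1 * a2)) * eC d (x * a1) else 0 := by
      intro a2
      rw [TW_apply]
      exact ite_shift (by constructor <;> intro h <;> linear_combination -h) _ _
    rw [Finset.sum_congr rfl fun a2 _ => step a2,
      Finset.sum_ite_eq' Finset.univ (x - y)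
        fun a2 => eC d (-((2 : ZMod d)⁻¹ * a1 * a2)) * eC d (x * a1)]
    simp only [Finset.mem_univ, if_true]
    rw [← eC_add]
    congr 1
    linear_combination (-(x * a1)) * h2
  rw [Finset.sum_congr rfl fun a1 _ => inner a1, char_sum]
  rw [Matrix.smul_apply, Pmat, Matrix.of_apply, smul_eq_mul]
  have hiff : ((2 : ZMod d)⁻¹ * (x + y) = 0) ↔ (x + y = 0) := by
    constructor
    · intro h
      have h3 : x + y = 2 * ((2 : ZMod d)⁻¹ * (x + y)) := by
        rw [← mul_assoc, mul_comm (2 : ZMod d) _, h2, one_mul]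
      rw [h, mul_zero] at h3; exact h3
    · intro h; rw [h, mul_zero]
  rw [ite_shift hiff]
  by_cases h : x + y = 0 <;> simp [h]

lemma Apoint0_eq (h2 : (2 : ZMod d)⁻¹ * 2 = 1) : Apoint0 d = Pmat d := by
  rw [Apoint0, sum_TW d h2, smul_smul, one_div,
    inv_mul_cancel₀ (Nat.cast_ne_zero.2 (NeZero.ne d)), one_smul]

lemma TWP_apply (u : ZMod d × ZMod d) (x w : ZMod d) :
    (TW d u * Pmat d) x w = if x + w = u.2 then
      eC d (-((2 : ZMod d)⁻¹ * u.1 * u.2)) * eC d (x * u.1) else 0 := by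
  rw [Matrix.mul_apply]
  have step : ∀ z, TW d u x z * Pmat d z w = if z = x - u.2 then
      (if (x - u.2) + w = 0 then
        eC d (-((2 : ZMod d)⁻¹ * u.1 * u.2)) * eC d (x * u.1) else 0) else 0 := by
    intro z
    rw [TW_apply, Pmat]
    by_cases h : z = x - u.2
    · have hx : x = z + u.2 := by rw [h]; ring
      simp [h, ← hx, ite_and, mul_ite, mul_one, mul_zero]
    · have hx : ¬ (x = z + u.2) := fun hx => h (by linear_combination -hx)
      simp [hx, h]
  rw [Finset.sum_congr rfl fun z _ => step z, Finset.sum_ite_eq' Finset.univ (x - u.2)]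
  simp only [Finset.mem_univ, if_true]
  exact ite_shift (by constructor <;> intro h <;> linear_combination h) _ _

lemma TWH_apply (u : ZMod d × ZMod d) (w y : ZMod d) :
    (TW d u)ᴴ w y = if y = w + u.2 then
      eC d ((2 : ZMod d)⁻¹ * u.1 * u.2) * eC d (-(y * u.1)) else 0 := by
  rw [Matrix.conjTranspose_apply, TW_apply]
  by_cases h : y = w + u.2
  · simp only [h, if_true, RCLike.star_def, _root_.map_mul, eC_conj, neg_neg]
  · simp [h]

lemma Apoint_apply (h2 : (2 : ZMod d)⁻¹ * 2 = 1) (u : ZMod d × ZMod d) (x y : ZMod d) :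
    Apoint d u x y = if x + y = u.2 + u.2 then eC d ((x - y) * u.1) else 0 := by
  rw [Apoint, Apoint0_eq d h2, Matrix.mul_apply]
  have step : ∀ w, (TW d u * Pmat d) x w * (TW d u)ᴴ w y = if w = u.2 - x then
      (if y = (u.2 - x) + u.2 then
        (eC d (-((2 : ZMod d)⁻¹ * u.1 * u.2)) * eC d (x * u.1)) *
          (eC d ((2 : ZMod d)⁻¹ * u.1 * u.2) * eC d (-(y * u.1))) else 0) else 0 := by
    intro w
    rw [TWP_apply, TWH_apply]
    by_cases h : w = u.2 - x
    · have hx : x + w = u.2 := by rw [h]; ring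
      subst h
      simp [hx]
    · have hx : ¬ (x + w = u.2) := fun hx => h (by linear_combination hx)
      simp [hx, h]
  rw [Finset.sum_congr rfl fun w _ => step w, Finset.sum_ite_eq' Finset.univ (u.2 - x)]
  simp only [Finset.mem_univ, if_true]
  have hval : (eC d (-((2 : ZMod d)⁻¹ * u.1 * u.2)) * eC d (x * u.1)) *
      (eC d ((2 : ZMod d)⁻¹ * u.1 * u.2) * eC d (-(y * u.1))) = eC d ((x - y) * u.1) := by
    rw [← eC_add, ← eC_add, ← eC_add]
    congr 1
    ring
  rw [hval]
  exact ite_shift (by constructor <;> intro h <;> linear_combination h) _ _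

end Aux

/-- The phase point operators sum to `d` times the identity. -/
theorem phase_point_sum_identity (d : ℕ) [NeZero d] (hodd : Odd d) (hd : 1 < d) :
    ∑ u : ZMod d × ZMod d, Apoint d u = (d : ℂ) • (1 : Matrix (ZMod d) (ZMod d) ℂ) := by
  have hu2 : IsUnit (2 : ZMod d) := by
    have hdvd : ¬ (2 ∣ d) := by
      rcases hodd with ⟨k, rfl⟩; omega
    simpa using ZMod.isUnit_prime_of_not_dvd Nat.prime_two hdvd
  have h2 : (2 : ZMod d)⁻¹ * 2 = 1 := ZMod.inv_mul_of_unit 2 hu2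
  ext x y
  rw [Matrix.sum_apply]
  rw [Finset.sum_congr rfl fun u _ => Apoint_apply d h2 u x y, Fintype.sum_prod_type]
  have inner : ∀ u1 : ZMod d, (∑ u2 : ZMod d,
      if x + y = u2 + u2 then eC d ((x - y) * u1) else 0) = eC d (u1 * (x - y)) := by
    intro u1
    have step : ∀ u2 : ZMod d, (if x + y = u2 + u2 then eC d ((x - y) * u1) else 0)
        = if u2 = (2 : ZMod d)⁻¹ * (x + y) then eC d ((x - y) * u1) else 0 := by
      intro u2
      refine ite_shift ?_ _ _
      constructor
      · intro h; linear_combination (-(2 : ZMod d)⁻¹) * h + (-u2) * h2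
      · intro h; linear_combination (-2 : ZMod d) * h - (x + y) * h2
    rw [Finset.sum_congr rfl fun u2 _ => step u2,
      Finset.sum_ite_eq' Finset.univ ((2 : ZMod d)⁻¹ * (x + y))]
    simp only [Finset.mem_univ, if_true]
    rw [mul_comm]
  rw [Finset.sum_congr rfl fun u1 _ => inner u1, char_sum]
  rw [Matrix.smul_apply, Matrix.one_apply, smul_eq_mul]
  rw [ite_shift sub_eq_zero]
  by_cases h : x = y <;> simp [h]
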